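/- A 1-Lipschitz function f : ℤ_p → ℤ_p is measure-preserving (with respect to the Haar probability measure on ℤ_p) if and only if it is an isometry, i.e., |f(x) − f(y)|_p = |x − y|_p for all x, y ∈ ℤ_p. -/

import Mathlib

open MeasureTheory Finset

namespace VDP

noncomputable instance (p : ℕ) [Fact p.Prime] : MeasurableSpace ℤ_[p] := borel _
instance (p : ℕ) [Fact p.Prime] : BorelSpace ℤ_[p] := ⟨rfl⟩

/-- The Haar probability measure on `ℤ_[p]`. -/
noncomputable def haarZp (p : ℕ) [Fact p.Prime] : Measure ℤ_[p] :=
  Measure.addHaarMeasure ⊤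

/-- `f` is 1-Lipschitz. -/
def IsLip (p : ℕ) [Fact p.Prime] (f : ℤ_[p] → ℤ_[p]) : Prop :=
  ∀ x y : ℤ_[p], ‖f x - f y‖ ≤ ‖x - y‖

/-- The van der Put basis function `χ(m, x)` on `ℤ_[p]` (with `⌊log_p 0⌋ = 0`). -/
noncomputable def chi (p : ℕ) [Fact p.Prime] (m : ℕ) (x : ℤ_[p]) : ℤ_[p] :=
  if ‖x - (m : ℤ_[p])‖ ≤ ((p : ℝ) ^ (Nat.log p m + 1))⁻¹ then 1 else 0

/-- `q(m) = m_s p^s`, the leading term of the `p`-adic expansion of `m`. -/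
def q (p m : ℕ) : ℕ := m / p ^ Nat.log p m * p ^ Nat.log p m

/-- `f` has van der Put expansion with coefficients `B`. -/
def vdpExpansion (p : ℕ) [Fact p.Prime] (f : ℤ_[p] → ℤ_[p]) (B : ℕ → ℤ_[p]) : Prop :=
  ∀ x, f x = ∑' m, B m * chi p m x

/-- `f` is bijective modulo `p^n`. -/
def BijModPow (p : ℕ) [Fact p.Prime] (f : ℤ_[p] → ℤ_[p]) (n : ℕ) : Prop :=
  Function.Bijective fun a : ZMod (p ^ n) => PadicInt.toZModPow n (f ((a.val : ℕ) : ℤ_[p]))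

/-- `f` is transitive modulo `p^n`. -/
def TransModPow (p : ℕ) [Fact p.Prime] (f : ℤ_[p] → ℤ_[p]) (n : ℕ) : Prop :=
  ∀ x : ℤ_[p], ∀ a : ZMod (p ^ n), ∃ k : ℕ, PadicInt.toZModPow n (f^[k] x) = a

/-- The `i`-th digit of the canonical `p`-adic expansion of `x`. -/
noncomputable def digit (p : ℕ) [Fact p.Prime] (x : ℤ_[p]) (i : ℕ) : ℕ :=
  x.appr (i + 1) / p ^ i % p

end VDP

section StmtAux

open MeasureTheory VDP PadicInt
open scoped ENNReal

namespace StmtAux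

variable (p : ℕ) [Fact p.Prime]

theorem neZero_pk (k : ℕ) : NeZero (p ^ k) :=
  ⟨pow_ne_zero _ (Fact.out (p := p.Prime)).ne_zero⟩

theorem toZModPow_eq_iff (k : ℕ) (x a : ℤ_[p]) :
    PadicInt.toZModPow k x = PadicInt.toZModPow k a ↔ ‖x - a‖ ≤ (p : ℝ) ^ (-(k : ℤ)) := by
  rw [← sub_eq_zero, ← map_sub, ← RingHom.mem_ker, PadicInt.ker_toZModPow,
    ← PadicInt.norm_le_pow_iff_mem_span_pow]

/-- The fibre of `toZModPow k` above `r`. -/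
def fib (k : ℕ) (r : ZMod (p ^ k)) : Set ℤ_[p] := PadicInt.toZModPow k ⁻¹' {r}

theorem mem_fib {k : ℕ} {r : ZMod (p ^ k)} {x : ℤ_[p]} :
    x ∈ fib p k r ↔ PadicInt.toZModPow k x = r := Iff.rfl

theorem toZModPow_val (k : ℕ) (r : ZMod (p ^ k)) :
    PadicInt.toZModPow k ((r.val : ℤ_[p])) = r := by
  haveI := neZero_pk p k
  rw [map_natCast, ZMod.natCast_zmod_val]

theorem fib_eq (k : ℕ) (r : ZMod (p ^ k)) :
    fib p k r = Metric.closedBall ((r.val : ℤ_[p])) ((p : ℝ) ^ (-(k : ℤ))) := by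
  ext x
  rw [Metric.mem_closedBall, dist_eq_norm, mem_fib]
  conv_lhs => rw [← toZModPow_val p k r]
  exact toZModPow_eq_iff p k x _

theorem measurableSet_fib (k : ℕ) (r : ZMod (p ^ k)) : MeasurableSet (fib p k r) := by
  rw [fib_eq]
  exact Metric.isClosed_closedBall.measurableSet

theorem isOpen_fib (k : ℕ) (r : ZMod (p ^ k)) : IsOpen (fib p k r) := by
  rw [fib_eq]
  exact IsUltrametricDist.isOpen_closedBall _ (zpow_pos (by exact_mod_cast (Fact.out (p := p.Prime)).pos) _).ne'

theorem measure_univ : haarZp p Set.univ = 1 := by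
  rw [haarZp, ← TopologicalSpace.PositiveCompacts.coe_top (α := ℤ_[p])]
  exact Measure.addHaarMeasure_self

theorem measure_fib_eq (k : ℕ) (r : ZMod (p ^ k)) :
    haarZp p (fib p k r) = haarZp p (fib p k 0) := by
  haveI : (haarZp p).IsAddLeftInvariant :=
    Measure.isAddLeftInvariant_addHaarMeasure ⊤
  have h : fib p k r = (fun x => (-(r.val : ℤ_[p])) + x) ⁻¹' fib p k 0 := by
    ext x
    simp only [fib, Set.mem_preimage, Set.mem_singleton_iff, map_add, map_neg,
      toZModPow_val, neg_add_eq_zero]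
    exact eq_comm
  rw [h, measure_preimage_add]

theorem measure_univ_eq_sum (k : ℕ) :
    ((p ^ k : ℕ) : ℝ≥0∞) * haarZp p (fib p k 0) = 1 := by
  haveI := neZero_pk p k
  have hunion : (⋃ r : ZMod (p ^ k), fib p k r) = Set.univ := by
    ext x
    simp only [Set.mem_iUnion, Set.mem_univ, iff_true]
    exact ⟨_, rfl⟩
  have hd : Pairwise (Function.onFun Disjoint fun r : ZMod (p ^ k) => fib p k r) :=
    fun a b hab => (Set.disjoint_singleton.mpr hab).preimage _
  have h1 := measure_iUnion (μ := haarZp p) hd (measurableSet_fib p k)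
  rw [hunion, measure_univ, tsum_fintype] at h1
  have h2 : ∀ r : ZMod (p ^ k), haarZp p (fib p k r) = haarZp p (fib p k 0) :=
    measure_fib_eq p k
  rw [Finset.sum_congr rfl (fun r _ => h2 r), Finset.sum_const, nsmul_eq_mul,
    Finset.card_univ, ZMod.card] at h1
  exact h1.symm

theorem measure_fib_ne_zero (k : ℕ) : haarZp p (fib p k 0) ≠ 0 := by
  intro h
  have := measure_univ_eq_sum p k
  rw [h, mul_zero] at this
  exact zero_ne_one this

theorem measure_fib_ne_top (k : ℕ) : haarZp p (fib p k 0) ≠ ⊤ := by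
  intro h
  have h0 : ((p ^ k : ℕ) : ℝ≥0∞) ≠ 0 := by
    haveI := neZero_pk p k
    exact_mod_cast (NeZero.ne (p ^ k))
  have := measure_univ_eq_sum p k
  rw [h, ENNReal.mul_top h0] at this
  exact (ENNReal.top_ne_one) this

/-- The induced map modulo `p^k`. -/
noncomputable def Fk (f : ℤ_[p] → ℤ_[p]) (k : ℕ) (a : ZMod (p ^ k)) : ZMod (p ^ k) :=
  PadicInt.toZModPow k (f ((a.val : ℤ_[p])))

theorem Fk_compat {f : ℤ_[p] → ℤ_[p]} (hf : IsLip p f) (k : ℕ) (x : ℤ_[p]) :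
    PadicInt.toZModPow k (f x) = Fk p f k (PadicInt.toZModPow k x) := by
  set a := PadicInt.toZModPow k x with ha
  have h1 : PadicInt.toZModPow k ((a.val : ℤ_[p])) = PadicInt.toZModPow k x := by
    rw [toZModPow_val]
  have h2 : ‖x - ((a.val : ℤ_[p]))‖ ≤ (p : ℝ) ^ (-(k : ℤ)) :=
    (toZModPow_eq_iff p k x _).mp h1.symm
  have h3 : ‖f x - f ((a.val : ℤ_[p]))‖ ≤ (p : ℝ) ^ (-(k : ℤ)) := (hf _ _).trans h2
  exact (toZModPow_eq_iff p k _ _).mpr h3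

theorem preimage_fib {f : ℤ_[p] → ℤ_[p]} (hf : IsLip p f) (k : ℕ) (r : ZMod (p ^ k)) :
    f ⁻¹' fib p k r =
      ⋃ a ∈ Finset.univ.filter (fun a : ZMod (p ^ k) => Fk p f k a = r), fib p k a := by
  ext x
  simp only [Set.mem_preimage, mem_fib, Set.mem_iUnion, Finset.mem_filter,
    Finset.mem_univ, true_and, exists_prop]
  constructor
  · intro hx
    exact ⟨PadicInt.toZModPow k x, by rw [← Fk_compat p hf, hx], rfl⟩
  · rintro ⟨a, hFa, hxa⟩
    rw [Fk_compat p hf, hxa, hFa]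

theorem measure_preimage_fib {f : ℤ_[p] → ℤ_[p]} (hf : IsLip p f) (k : ℕ) (r : ZMod (p ^ k)) :
    haarZp p (f ⁻¹' fib p k r) =
      ((Finset.univ.filter (fun a : ZMod (p ^ k) => Fk p f k a = r)).card : ℝ≥0∞) *
        haarZp p (fib p k 0) := by
  haveI := neZero_pk p k
  have hm :=
    measure_biUnion_finset (μ := haarZp p)
      (s := Finset.univ.filter (fun a : ZMod (p ^ k) => Fk p f k a = r))
      (f := fun a => fib p k a)
      (fun a _ b _ hab => (Set.disjoint_singleton.mpr hab).preimage _)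
      (fun a _ => measurableSet_fib p k a)
  rw [preimage_fib p hf k r, hm,
    Finset.sum_congr rfl (fun a _ => measure_fib_eq p k a), Finset.sum_const,
    nsmul_eq_mul]

/-- The π-system of fibres. -/
def Cb : Set (Set ℤ_[p]) := {s | ∃ (k : ℕ) (r : ZMod (p ^ k)), s = fib p k r}

theorem fib_subset {k l : ℕ} (hlk : l ≤ k) {r : ZMod (p ^ k)} {q : ZMod (p ^ l)}
    {x : ℤ_[p]} (hx1 : x ∈ fib p k r) (hx2 : x ∈ fib p l q) : fib p k r ⊆ fib p l q := by
  intro y hy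
  have h1 : ‖y - x‖ ≤ (p : ℝ) ^ (-(k : ℤ)) :=
    (toZModPow_eq_iff p k y x).mp (hy.trans hx1.symm)
  have hp1 : (1 : ℝ) ≤ p := by exact_mod_cast (Fact.out (p := p.Prime)).one_le
  have h2 : ‖y - x‖ ≤ (p : ℝ) ^ (-(l : ℤ)) :=
    h1.trans (zpow_le_zpow_right₀ hp1 (by omega))
  have h3 := (toZModPow_eq_iff p l y x).mpr h2
  exact (h3.trans hx2 : PadicInt.toZModPow l y = q)

theorem piSystem : IsPiSystem (Cb p) := by
  rintro s ⟨k, r, rfl⟩ t ⟨l, q, rfl⟩ ⟨x, hx1, hx2⟩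
  rcases le_total l k with h | h
  · rw [Set.inter_eq_left.mpr (fib_subset p h hx1 hx2)]
    exact ⟨k, r, rfl⟩
  · rw [Set.inter_eq_right.mpr (fib_subset p h hx2 hx1)]
    exact ⟨l, q, rfl⟩

theorem isBasis : TopologicalSpace.IsTopologicalBasis (Cb p) := by
  apply TopologicalSpace.isTopologicalBasis_of_isOpen_of_nhds
  · rintro s ⟨k, r, rfl⟩
    exact isOpen_fib p k r
  · intro a U haU hU
    obtain ⟨ε, hε, hball⟩ := Metric.isOpen_iff.mp hU a haU
    obtain ⟨k, hk⟩ := PadicInt.exists_pow_neg_lt p hε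
    refine ⟨fib p k (PadicInt.toZModPow k a), ⟨k, _, rfl⟩, rfl, ?_⟩
    intro y hy
    apply hball
    rw [Metric.mem_ball, dist_eq_norm]
    exact lt_of_le_of_lt ((toZModPow_eq_iff p k y a).mp hy) hk

theorem borel_eq :
    (inferInstance : MeasurableSpace ℤ_[p]) = MeasurableSpace.generateFrom (Cb p) :=
  BorelSpace.measurable_eq.trans (isBasis p).borel_eq_generateFrom

end StmtAux

end StmtAux

open VDP MeasureTheory in
theorem stmt1 (p : ℕ) [Fact p.Prime] (f : ℤ_[p] → ℤ_[p]) (hf : IsLip p f) :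
    MeasurePreserving f (haarZp p) (haarZp p) ↔
      ∀ x y : ℤ_[p], ‖f x - f y‖ = ‖x - y‖ := by
  have hpp : (1 : ℝ) < p := by exact_mod_cast (Fact.out (p := p.Prime)).one_lt
  have hmf : Measurable f := by
    have hl : LipschitzWith 1 f :=
      LipschitzWith.of_dist_le_mul fun x y => by
        rw [dist_eq_norm, dist_eq_norm]; simpa using hf x y
    exact hl.continuous.measurable
  constructor
  · intro hMP
    -- from measure preservation, each induced map mod p^k is injective
    have hinj : ∀ k : ℕ, Function.Injective (StmtAux.Fk p f k) := by
      intro k a b hab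
      set r := StmtAux.Fk p f k a with hr
      have h1 : haarZp p (f ⁻¹' StmtAux.fib p k r) = haarZp p (StmtAux.fib p k r) :=
        hMP.measure_preimage (StmtAux.measurableSet_fib p k r).nullMeasurableSet
      rw [StmtAux.measure_preimage_fib p hf k r, StmtAux.measure_fib_eq p k r] at h1
      have hcard :
          ((Finset.univ.filter fun u : ZMod (p ^ k) => StmtAux.Fk p f k u = r).card : ENNReal)
            = 1 := by
        have h2 :
            haarZp p (StmtAux.fib p k 0) *
              ((Finset.univ.filter fun u : ZMod (p ^ k) =>
                StmtAux.Fk p f k u = r).card : ENNReal) =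
            haarZp p (StmtAux.fib p k 0) * 1 := by
          rw [mul_comm, h1, mul_one]
        exact (ENNReal.mul_right_inj (StmtAux.measure_fib_ne_zero p k)
          (StmtAux.measure_fib_ne_top p k)).mp h2
      have hcard' :
          (Finset.univ.filter fun u : ZMod (p ^ k) => StmtAux.Fk p f k u = r).card ≤ 1 :=
        le_of_eq (Nat.cast_eq_one.mp hcard)
      exact Finset.card_le_one.mp hcard' a (by simp [hr]) b (by simp [hr, ← hab])
    intro x y
    rcases eq_or_ne x y with rfl | hxy
    · simp
    refine le_antisymm (hf x y) ?_
    have hx0 : x - y ≠ 0 := sub_ne_zero.mpr hxy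
    set n := ((x - y).valuation : ℤ) with hn
    have hxynorm : ‖x - y‖ = (p : ℝ) ^ (-n) := PadicInt.norm_eq_zpow_neg_valuation hx0
    set k := n.toNat + 1 with hk
    have hnk : -(k : ℤ) < -n := by
      have := Int.self_le_toNat n
      omega
    have hne : PadicInt.toZModPow k x ≠ PadicInt.toZModPow k y := by
      rw [Ne, StmtAux.toZModPow_eq_iff, hxynorm]
      exact not_le.mpr (zpow_lt_zpow_right₀ hpp hnk)
    have h2 : PadicInt.toZModPow k (f x) ≠ PadicInt.toZModPow k (f y) := by
      rw [StmtAux.Fk_compat p hf, StmtAux.Fk_compat p hf]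
      exact fun h => hne (hinj k h)
    have h3 : (p : ℝ) ^ (-(k : ℤ)) < ‖f x - f y‖ :=
      not_le.mp fun h => h2 ((StmtAux.toZModPow_eq_iff p k _ _).mpr h)
    have hf0 : f x - f y ≠ 0 := by
      intro h
      rw [h, norm_zero] at h3
      exact absurd h3 (not_lt.mpr (zpow_pos (by linarith) _).le)
    set m := ((f x - f y).valuation : ℤ) with hm
    have hfn : ‖f x - f y‖ = (p : ℝ) ^ (-m) := PadicInt.norm_eq_zpow_neg_valuation hf0
    rw [hfn] at h3 ⊢
    rw [hxynorm]
    have hmk : -(k : ℤ) < -m := (zpow_lt_zpow_iff_right₀ hpp).mp h3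
    have hvn : (0 : ℤ) ≤ n := Int.natCast_nonneg _
    have hmn : -n ≤ -m := by
      have h4 : ((n.toNat : ℤ)) = n := Int.toNat_of_nonneg hvn
      omega
    exact zpow_le_zpow_right₀ hpp.le hmn
  · intro hiso
    have hinj : ∀ k : ℕ, Function.Injective (StmtAux.Fk p f k) := by
      intro k a b hab
      have h1 : ‖f ((a.val : ℤ_[p])) - f ((b.val : ℤ_[p]))‖ ≤ (p : ℝ) ^ (-(k : ℤ)) :=
        (StmtAux.toZModPow_eq_iff p k _ _).mp hab
      have h2 : ‖((a.val : ℤ_[p])) - ((b.val : ℤ_[p]))‖ ≤ (p : ℝ) ^ (-(k : ℤ)) := by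
        rw [← hiso]; exact h1
      have h3 := (StmtAux.toZModPow_eq_iff p k _ _).mpr h2
      rwa [StmtAux.toZModPow_val, StmtAux.toZModPow_val] at h3
    refine ⟨hmf, ?_⟩
    haveI : IsFiniteMeasure ((haarZp p).map f) :=
      ⟨by
        rw [Measure.map_apply hmf MeasurableSet.univ, Set.preimage_univ, StmtAux.measure_univ]
        exact ENNReal.one_lt_top⟩
    refine ext_of_generate_finite (StmtAux.Cb p) (StmtAux.borel_eq p) (StmtAux.piSystem p)
      ?_ ?_
    · rintro s ⟨k, r, rfl⟩
      rw [Measure.map_apply hmf (StmtAux.measurableSet_fib p k r),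
        StmtAux.measure_preimage_fib p hf k r, StmtAux.measure_fib_eq p k r]
      have hbij : Function.Bijective (StmtAux.Fk p f k) :=
        Finite.injective_iff_bijective.mp (hinj k)
      obtain ⟨a, ha⟩ := hbij.surjective r
      have hfil :
          Finset.univ.filter (fun u : ZMod (p ^ k) => StmtAux.Fk p f k u = r) = {a} := by
        ext b
        simp only [Finset.mem_filter, Finset.mem_univ, true_and, Finset.mem_singleton]
        exact ⟨fun hb => hinj k (hb.trans ha.symm), fun hb => hb ▸ ha⟩
      rw [hfil, Finset.card_singleton, Nat.cast_one, one_mul]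
    · rw [Measure.map_apply hmf MeasurableSet.univ, Set.preimage_univ]
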